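/- Let K^H(t,s) = c_H s^{1/2-H} ∫_s^t (u-s)^{H-3/2} u^{H-1/2} du for 0 < s < t, with H > 1/2 and c_H = (H(2H-1)/β(2-2H, H-1/2))^{1/2}. Then ∂K^H/∂t (t,s) = c_H (s/t)^{1/2-H} (t-s)^{H-3/2}, and for all a, b > 0 with a ≠ b: ∫_0^{a∧b} ∂₁K^H(a,u) ∂₁K^H(b,u) du = H(2H-1) |a-b|^{2H-2}. -/

import Mathlib

open MeasureTheory intervalIntegral Set Topology

/-- The real Beta function `β(x,y) = Γ(x)Γ(y)/Γ(x+y)`. -/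
noncomputable def betaR (x y : ℝ) : ℝ := Real.Gamma x * Real.Gamma y / Real.Gamma (x + y)

/-- The constant `c_H = (H(2H-1)/β(2-2H, H-1/2))^{1/2}`. -/
noncomputable def cH (H : ℝ) : ℝ := Real.sqrt (H * (2 * H - 1) / betaR (2 - 2 * H) (H - 1 / 2))

/-- The Volterra kernel `K^H(t,s) = c_H s^{1/2-H} ∫_s^t (u-s)^{H-3/2} u^{H-1/2} du`. -/
noncomputable def KH (H t s : ℝ) : ℝ :=
  cH H * s ^ ((1:ℝ) / 2 - H) * ∫ u in s..t, (u - s) ^ (H - 3 / 2) * u ^ (H - 1 / 2)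

/-- The partial derivative `∂₁K^H(t,s) = c_H (s/t)^{1/2-H} (t-s)^{H-3/2}`. -/
noncomputable def dKH (H t s : ℝ) : ℝ := cH H * (s / t) ^ ((1:ℝ) / 2 - H) * (t - s) ^ (H - 3 / 2)

lemma real_beta {a b : ℝ} (ha : 0 < a) (hb : 0 < b) :
    ∫ x in (0:ℝ)..1, x ^ (a - 1) * (1 - x) ^ (b - 1) = betaR a b := by
  have h := Complex.Gamma_mul_Gamma_eq_betaIntegral (s := (a:ℂ)) (t := (b:ℂ))
    (by simpa using ha) (by simpa using hb)
  have hint : Complex.betaIntegral a b =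
      ((∫ x in (0:ℝ)..1, x ^ (a - 1) * (1 - x) ^ (b - 1) : ℝ) : ℂ) := by
    rw [Complex.betaIntegral]
    have hcoe := RCLike.intervalIntegral_ofReal (𝕜 := ℂ) (a := (0:ℝ)) (b := 1)
      (μ := volume) (f := fun x => x ^ (a - 1) * (1 - x) ^ (b - 1))
    rw [show ((∫ x in (0:ℝ)..1, x ^ (a - 1) * (1 - x) ^ (b - 1) : ℝ) : ℂ)
        = ∫ x in (0:ℝ)..1, ((x ^ (a - 1) * (1 - x) ^ (b - 1) : ℝ) : ℂ) by exact_mod_cast hcoe.symm]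
    refine intervalIntegral.integral_congr fun x hx => ?_
    rw [Set.uIcc_of_le zero_le_one] at hx
    rw [Complex.ofReal_mul, Complex.ofReal_cpow hx.1,
      Complex.ofReal_cpow (by linarith [hx.2] : (0:ℝ) ≤ 1 - x)]
    push_cast
    ring
  rw [hint] at h
  have hG : Complex.Gamma ((a:ℂ) + b) = (Real.Gamma (a + b) : ℂ) := by
    rw [← Complex.ofReal_add, Complex.Gamma_ofReal]
  rw [Complex.Gamma_ofReal, Complex.Gamma_ofReal, hG] at h
  have hGab : Real.Gamma (a + b) ≠ 0 := (Real.Gamma_pos_of_pos (by linarith)).ne'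
  have := congrArg Complex.re h
  simp only [← Complex.ofReal_mul, Complex.ofReal_re] at this
  rw [betaR]
  rw [this]
  field_simp

lemma II2 {p q : ℝ} (hp : -1 < p) (hq : -1 < q) {c : ℝ} (hc : 0 < c) {h : ℝ → ℝ}
    (hh : ContinuousOn h (Icc 0 c)) :
    IntervalIntegrable (fun u => u ^ p * (c - u) ^ q * h u) volume 0 c := by
  have half : (0:ℝ) < c / 2 := by linarith
  have h1 : IntervalIntegrable (fun u => u ^ p * (c - u) ^ q * h u) volume 0 (c / 2) := by
    have base : IntervalIntegrable (fun u : ℝ => u ^ p) volume 0 (c / 2) :=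
      intervalIntegrable_rpow' hp
    have hcont : ContinuousOn (fun u : ℝ => (c - u) ^ q * h u) (Set.uIcc 0 (c / 2)) := by
      rw [uIcc_of_le half.le]
      refine ContinuousOn.mul (ContinuousOn.rpow_const (by fun_prop) fun x hx => ?_)
        (hh.mono (Icc_subset_Icc le_rfl (by linarith)))
      left; simp only [mem_Icc] at hx; intro hcx; nlinarith [hx.2]
    simpa [mul_assoc] using base.mul_continuousOn hcont
  have h2 : IntervalIntegrable (fun u => u ^ p * (c - u) ^ q * h u) volume (c / 2) c := by
    have base0 : IntervalIntegrable (fun u : ℝ => u ^ q) volume 0 (c / 2) :=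
      intervalIntegrable_rpow' hq
    have base : IntervalIntegrable (fun u : ℝ => (c - u) ^ q) volume (c / 2) c := by
      simpa [sub_zero, show c - c / 2 = c / 2 by ring] using (base0.comp_sub_left c).symm
    have hcont : ContinuousOn (fun u : ℝ => u ^ p * h u) (Set.uIcc (c / 2) c) := by
      rw [uIcc_of_le (by linarith)]
      refine ContinuousOn.mul (ContinuousOn.rpow_const (by fun_prop) fun x hx => ?_)
        (hh.mono (Icc_subset_Icc half.le le_rfl))
      left; simp only [mem_Icc] at hx; nlinarith [hx.1]
    have := base.mul_continuousOn hcont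
    refine this.congr (fun u _ => ?_)
    ring
  exact h1.trans h2

lemma logmul3 {a b c d : ℝ} (ha : 0 < a) (hb : 0 < b) (hc : 0 < c) (hd : 0 < d) :
    Real.log (a * b * c / d) = Real.log a + Real.log b + Real.log c - Real.log d := by
  rw [Real.log_div (by positivity) hd.ne', Real.log_mul (by positivity) hc.ne',
    Real.log_mul ha.ne' hb.ne']

lemma key {H s t : ℝ} (hH : 1 / 2 < H) (hH1 : H < 1) (hs : 0 < s) (hst : s < t) {w : ℝ}
    (hw : w ∈ Icc (0:ℝ) 1) :
    s * t * (t - s) / (t - s + s * w) ^ 2 *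
        ((s * t * w / (t - s + s * w)) ^ (1 - 2 * H) *
          ((s - s * t * w / (t - s + s * w)) ^ (H - 3 / 2) *
            (t - s * t * w / (t - s + s * w)) ^ (H - 3 / 2))) =
      (s * t) ^ ((1:ℝ) / 2 - H) * (t - s) ^ (2 * H - 2) *
        (w ^ (1 - 2 * H) * (1 - w) ^ (H - 3 / 2)) := by
  obtain ⟨hw0, hw1⟩ := hw
  have ht : 0 < t := hs.trans hst
  have hts : 0 < t - s := by linarith
  have hD : 0 < t - s + s * w := by nlinarith
  have hDne : t - s + s * w ≠ 0 := hD.ne'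
  have e2 : s - s * t * w / (t - s + s * w) = s * (t - s) * (1 - w) / (t - s + s * w) := by
    field_simp; ring
  have e3 : t - s * t * w / (t - s + s * w) = t * (t - s) / (t - s + s * w) := by
    field_simp; ring
  rw [e2, e3]
  rcases eq_or_lt_of_le hw0 with h0 | h0
  · rw [← h0]
    rw [show s * t * 0 / (t - s + s * 0) = 0 by ring, Real.zero_rpow (by intro h; linarith : 1 - 2 * H ≠ 0)]
    ring
  rcases eq_or_lt_of_le hw1 with h1 | h1
  · rw [h1]
    rw [show s * (t - s) * (1 - 1) / (t - s + s * 1) = 0 by ring,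
      Real.zero_rpow (by intro h; linarith : H - 3 / 2 ≠ 0), sub_self,
      Real.zero_rpow (by intro h; linarith : H - 3 / 2 ≠ 0)]
    ring
  have h1w : 0 < 1 - w := by linarith
  set D := t - s + s * w with hDdef
  have p1 : 0 < s * t * w / D := div_pos (by positivity) hD
  have p2 : 0 < s * (t - s) * (1 - w) / D := div_pos (by positivity) hD
  have p3 : 0 < t * (t - s) / D := div_pos (by positivity) hD
  have hD2 : D ^ 2 = Real.exp (Real.log D * 2) := by
    rw [← Real.rpow_natCast D 2, Real.rpow_def_of_pos hD]; norm_num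
  have hSTT : s * t * (t - s) = Real.exp (Real.log (s * t * (t - s))) :=
    (Real.exp_log (by positivity)).symm
  rw [Real.rpow_def_of_pos p1, Real.rpow_def_of_pos p2, Real.rpow_def_of_pos p3,
    Real.rpow_def_of_pos (by positivity : (0:ℝ) < s * t),
    Real.rpow_def_of_pos hts, Real.rpow_def_of_pos h0, Real.rpow_def_of_pos h1w,
    hD2, hSTT]
  rw [div_eq_mul_inv, ← Real.exp_neg]
  simp only [← Real.exp_add]
  rw [Real.exp_eq_exp]
  rw [logmul3 hs ht h0 hD, logmul3 hs hts h1w hD,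
    Real.log_div (by positivity) hDne, Real.log_mul ht.ne' hts.ne',
    Real.log_mul hs.ne' ht.ne', Real.log_mul (by positivity) hts.ne',
    Real.log_mul hs.ne' ht.ne']
  ring

lemma betaR_pos {H : ℝ} (hH : 1 / 2 < H) (hH1 : H < 1) : 0 < betaR (2 - 2 * H) (H - 1 / 2) := by
  unfold betaR
  have h1 : (0:ℝ) < 2 - 2 * H := by linarith
  have h2 : (0:ℝ) < H - 1 / 2 := by linarith
  have h3 : (0:ℝ) < 2 - 2 * H + (H - 1 / 2) := by linarith
  exact div_pos (mul_pos (Real.Gamma_pos_of_pos h1) (Real.Gamma_pos_of_pos h2))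
    (Real.Gamma_pos_of_pos h3)

lemma cH_sq {H : ℝ} (hH : 1 / 2 < H) (hH1 : H < 1) :
    cH H * cH H * betaR (2 - 2 * H) (H - 1 / 2) = H * (2 * H - 1) := by
  have hB := betaR_pos hH hH1
  rw [cH, Real.mul_self_sqrt (div_nonneg (by nlinarith) hB.le)]
  rw [div_mul_cancel₀ _ hB.ne']

lemma main_lt {H s t : ℝ} (hH : 1 / 2 < H) (hH1 : H < 1) (hs : 0 < s) (hst : s < t) :
    ∫ u in (0:ℝ)..s, dKH H s u * dKH H t u = H * (2 * H - 1) * (t - s) ^ (2 * H - 2) := by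
  have ht : 0 < t := hs.trans hst
  have hts : 0 < t - s := by linarith
  set g : ℝ → ℝ := fun u => u ^ (1 - 2 * H) * (s - u) ^ (H - 3 / 2) * (t - u) ^ (H - 3 / 2)
    with hg
  set C0 : ℝ := cH H * cH H * (s * t) ^ (H - 1 / 2) with hC0
  set C1 : ℝ := (s * t) ^ ((1:ℝ) / 2 - H) * (t - s) ^ (2 * H - 2) with hC1
  set φ : ℝ → ℝ := fun w => s * t * w / (t - s + s * w) with hφ
  set φ' : ℝ → ℝ := fun w => s * t * (t - s) / (t - s + s * w) ^ 2 with hφ'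
  have hDpos : ∀ w ∈ Icc (0:ℝ) 1, 0 < t - s + s * w := fun w hw => by
    have := hw.1; nlinarith
  -- step 1: rewrite the integrand
  have step1 : ∫ u in (0:ℝ)..s, dKH H s u * dKH H t u = ∫ u in (0:ℝ)..s, C0 * g u := by
    refine intervalIntegral.integral_congr fun u hu => ?_
    rw [uIcc_of_le hs.le] at hu
    rcases eq_or_lt_of_le hu.1 with h0 | h0
    · rw [← h0]
      simp only [dKH, hg, hC0, zero_div,
        Real.zero_rpow (by intro h; linarith : (1:ℝ) / 2 - H ≠ 0),
        Real.zero_rpow (by intro h; linarith : 1 - 2 * H ≠ 0)]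
      ring
    · have hkey : (u / s) ^ ((1:ℝ) / 2 - H) * (u / t) ^ ((1:ℝ) / 2 - H) =
          (s * t) ^ (H - 1 / 2) * u ^ (1 - 2 * H) := by
        rw [Real.div_rpow h0.le hs.le, Real.div_rpow h0.le ht.le, div_mul_div_comm,
          ← Real.rpow_add h0, ← Real.mul_rpow hs.le ht.le,
          show (1:ℝ) / 2 - H + ((1:ℝ) / 2 - H) = 1 - 2 * H by ring,
          show H - (1:ℝ) / 2 = -((1:ℝ) / 2 - H) by ring,
          Real.rpow_neg (by positivity)]
        field_simp
      simp only [dKH, hg, hC0]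
      calc cH H * (u / s) ^ ((1:ℝ) / 2 - H) * (s - u) ^ (H - 3 / 2) *
            (cH H * (u / t) ^ ((1:ℝ) / 2 - H) * (t - u) ^ (H - 3 / 2))
          = cH H * cH H * ((u / s) ^ ((1:ℝ) / 2 - H) * (u / t) ^ ((1:ℝ) / 2 - H)) *
            ((s - u) ^ (H - 3 / 2) * (t - u) ^ (H - 3 / 2)) := by ring
        _ = cH H * cH H * ((s * t) ^ (H - 1 / 2) * u ^ (1 - 2 * H)) *
            ((s - u) ^ (H - 3 / 2) * (t - u) ^ (H - 3 / 2)) := by rw [hkey]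
        _ = _ := by ring
  -- substitution
  have hφ0 : φ 0 = 0 := by simp [hφ]
  have hφ1 : φ 1 = s := by
    simp only [hφ, mul_one]
    rw [show t - s + s = t by ring]
    field_simp
  have himage : ∀ w ∈ Icc (0:ℝ) 1, φ w ∈ Icc 0 s := by
    intro w hw
    have hD := hDpos w hw
    constructor
    · exact div_nonneg (mul_nonneg (by positivity) hw.1) hD.le
    · rw [div_le_iff₀ hD]
      nlinarith [mul_nonneg (mul_nonneg hs.le hts.le) (sub_nonneg.mpr hw.2)]
  have himageo : ∀ w ∈ Ioo (0:ℝ) 1, φ w ∈ Ioo 0 s := by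
    intro w hw
    have hD := hDpos w ⟨hw.1.le, hw.2.le⟩
    constructor
    · exact div_pos (mul_pos (mul_pos hs ht) hw.1) hD
    · rw [div_lt_iff₀ hD]
      nlinarith [mul_pos (mul_pos hs hts) (by linarith [hw.2] : (0:ℝ) < 1 - w)]
  have hgint : IntervalIntegrable g volume 0 s := by
    have hcont : ContinuousOn (fun u : ℝ => (t - u) ^ (H - 3 / 2)) (Icc 0 s) := by
      apply ContinuousOn.rpow_const (by fun_prop)
      intro x hx; left; have := hx.2; intro hc; linarith [(sub_eq_zero.mp hc)]
    exact II2 (by linarith) (by linarith) hs hcont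
  have hkeyC : ∀ x ∈ Icc (0:ℝ) 1, φ' x • g (φ x) = C1 * (x ^ (1 - 2 * H) * (1 - x) ^ (H - 3 / 2)) := by
    intro x hx
    have := key hH hH1 hs hst hx
    simp only [hφ, hφ', hg, hC1, smul_eq_mul]
    rw [← this]; ring
  have hbetaint : IntervalIntegrable (fun x : ℝ => C1 * (x ^ (1 - 2 * H) * (1 - x) ^ (H - 3 / 2)))
      volume 0 1 := by
    have := (II2 (p := 1 - 2 * H) (q := H - 3 / 2) (by linarith) (by linarith) one_pos
      (continuousOn_const (c := (1:ℝ)))).const_mul C1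
    refine this.congr (fun u _ => ?_)
    ring
  have hsub : ∫ x in (0:ℝ)..1, φ' x • g (φ x) = ∫ u in (0:ℝ)..s, g u := by
    have h := intervalIntegral.integral_comp_smul_deriv''' (a := (0:ℝ)) (b := 1)
      (f := φ) (f' := φ') (g := g) ?_ ?_ ?_ ?_ ?_
    · rw [hφ0, hφ1] at h; exact h
    · -- continuity of φ
      apply ContinuousOn.div (by fun_prop) (by fun_prop)
      intro x hx
      rw [uIcc_of_le zero_le_one] at hx
      exact (hDpos x hx).ne'
    · -- derivative
      intro x hx
      rw [min_eq_left zero_le_one, max_eq_right zero_le_one] at hx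
      have hD := hDpos x ⟨hx.1.le, hx.2.le⟩
      have hnum : HasDerivAt (fun w : ℝ => s * t * w) (s * t) x := by
        simpa using (hasDerivAt_id x).const_mul (s * t)
      have hden : HasDerivAt (fun w : ℝ => t - s + s * w) s x := by
        simpa using ((hasDerivAt_id x).const_mul s).const_add (t - s)
      have := hnum.div hden hD.ne'
      have heq : (s * t * (t - s + s * x) - s * t * x * s) / (t - s + s * x) ^ 2 = φ' x := by
        rw [hφ']; congr 1; ring
      rw [heq] at this
      exact this.hasDerivWithinAt
    · -- continuity of g on image of Ioo
      rw [min_eq_left zero_le_one, max_eq_right zero_le_one]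
      have hsub2 : φ '' Ioo 0 1 ⊆ Ioo 0 s := by
        rintro _ ⟨w, hw, rfl⟩; exact himageo w hw
      refine ContinuousOn.mono ?_ hsub2
      refine ContinuousOn.mul (ContinuousOn.mul ?_ ?_) ?_
      · exact ContinuousOn.rpow_const (by fun_prop) fun x hx => Or.inl hx.1.ne'
      · exact ContinuousOn.rpow_const (by fun_prop) fun x hx =>
          Or.inl (by have := hx.2; intro hc; linarith [sub_eq_zero.mp hc])
      · exact ContinuousOn.rpow_const (by fun_prop) fun x hx =>
          Or.inl (by have := hx.2; intro hc; nlinarith [sub_eq_zero.mp hc])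
    · -- integrability of g on image of uIcc
      have hsub2 : φ '' uIcc 0 1 ⊆ Icc 0 s := by
        rw [uIcc_of_le zero_le_one]
        rintro _ ⟨w, hw, rfl⟩; exact himage w hw
      have h2 := (intervalIntegrable_iff').mp hgint
      rw [uIcc_of_le hs.le] at h2
      exact h2.mono_set hsub2
    · -- integrability of φ' • g ∘ φ
      rw [uIcc_of_le zero_le_one]
      have hI : IntegrableOn (fun x : ℝ => C1 * (x ^ (1 - 2 * H) * (1 - x) ^ (H - 3 / 2)))
          (Icc 0 1) := by
        have := (intervalIntegrable_iff').mp hbetaint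
        rwa [uIcc_of_le zero_le_one] at this
      exact hI.congr_fun (fun x hx => (hkeyC x hx).symm) measurableSet_Icc
  have step2 : ∫ x in (0:ℝ)..1, φ' x • g (φ x) =
      C1 * betaR (2 - 2 * H) (H - 1 / 2) := by
    rw [intervalIntegral.integral_congr (g := fun x => C1 * (x ^ (1 - 2 * H) * (1 - x) ^ (H - 3 / 2)))
      (fun x hx => by rw [uIcc_of_le zero_le_one] at hx; exact hkeyC x hx),
      intervalIntegral.integral_const_mul]
    congr 1
    have hrb := real_beta (a := 2 - 2 * H) (b := H - 1 / 2) (by linarith) (by linarith)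
    rw [show (2 - 2 * H - 1 : ℝ) = 1 - 2 * H by ring,
      show (H - 1 / 2 - 1 : ℝ) = H - 3 / 2 by ring] at hrb
    exact hrb
  rw [step1, intervalIntegral.integral_const_mul, ← hsub, step2]
  rw [hC0, hC1]
  have hst1 : (s * t) ^ (H - 1 / 2) * ((s * t) ^ ((1:ℝ) / 2 - H)) = 1 := by
    rw [← Real.rpow_add (by positivity), show H - 1 / 2 + ((1:ℝ) / 2 - H) = 0 by ring,
      Real.rpow_zero]
  have := cH_sq hH hH1
  calc cH H * cH H * (s * t) ^ (H - 1 / 2) *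
        ((s * t) ^ ((1:ℝ) / 2 - H) * (t - s) ^ (2 * H - 2) * betaR (2 - 2 * H) (H - 1 / 2))
      = (cH H * cH H * betaR (2 - 2 * H) (H - 1 / 2)) *
        ((s * t) ^ (H - 1 / 2) * (s * t) ^ ((1:ℝ) / 2 - H)) * (t - s) ^ (2 * H - 2) := by ring
    _ = H * (2 * H - 1) * (t - s) ^ (2 * H - 2) := by rw [hst1, this]; ring

/-- For `H > 1/2`, `∂K^H/∂t(t,s) = c_H (s/t)^{1/2-H}(t-s)^{H-3/2}`, and for
`a, b > 0`, `a ≠ b`: `∫_0^{a∧b} ∂₁K^H(a,u) ∂₁K^H(b,u) du = H(2H-1)|a-b|^{2H-2}`. -/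
theorem stmt_8 (H : ℝ) (hH : 1 / 2 < H) (hH1 : H < 1) :
    (∀ s t : ℝ, 0 < s → s < t → HasDerivAt (fun τ => KH H τ s) (dKH H t s) t) ∧
    (∀ a b : ℝ, 0 < a → 0 < b → a ≠ b →
      ∫ u in (0:ℝ)..(min a b), dKH H a u * dKH H b u =
        H * (2 * H - 1) * |a - b| ^ (2 * H - 2)) := by
  constructor
  · intro s t hs hst
    have ht : 0 < t := hs.trans hst
    set f : ℝ → ℝ := fun u => (u - s) ^ (H - 3 / 2) * u ^ (H - 1 / 2) with hf
    have hint : IntervalIntegrable f volume s t := by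
      have base : IntervalIntegrable (fun x : ℝ => x ^ (H - 3 / 2)) volume 0 (t - s) :=
        intervalIntegrable_rpow' (by linarith)
      have base2 : IntervalIntegrable (fun u : ℝ => (u - s) ^ (H - 3 / 2)) volume s t := by
        simpa using base.comp_sub_right s
      apply base2.mul_continuousOn
      apply ContinuousOn.rpow_const (by fun_prop)
      intro x hx
      rw [uIcc_of_le (by linarith)] at hx
      exact Or.inl (ne_of_gt (hs.trans_le hx.1))
    have hcont : ContinuousOn f (Ioi s) := by
      apply ContinuousOn.mul
      · exact ContinuousOn.rpow_const (by fun_prop) fun x hx =>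
          Or.inl (by simp only [mem_Ioi] at hx; intro hc; linarith [sub_eq_zero.mp hc])
      · exact ContinuousOn.rpow_const (by fun_prop) fun x hx =>
          Or.inl (by simp only [mem_Ioi] at hx; intro hc; linarith)
    have hmeas : StronglyMeasurableAtFilter f (𝓝 t) volume :=
      hcont.stronglyMeasurableAtFilter isOpen_Ioi t hst
    have hct : ContinuousAt f t := hcont.continuousAt (isOpen_Ioi.mem_nhds hst)
    have hFTC := intervalIntegral.integral_hasDerivAt_right hint hmeas hct
    have h2 := hFTC.const_mul (cH H * s ^ ((1:ℝ) / 2 - H))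
    simp only [KH]
    have hts' : t ^ (H - 1 / 2) = (t ^ ((1:ℝ) / 2 - H))⁻¹ := by
      rw [show H - 1 / 2 = -((1:ℝ) / 2 - H) by ring, Real.rpow_neg ht.le]
    have hval : dKH H t s = cH H * s ^ ((1:ℝ) / 2 - H) * f t := by
      simp only [hf, dKH]
      rw [Real.div_rpow hs.le ht.le, hts']
      ring
    rw [hval]
    exact h2
  · intro a b ha hb hab
    rcases lt_or_gt_of_ne hab with h | h
    · rw [min_eq_left h.le, abs_of_neg (by linarith : a - b < 0), neg_sub]
      exact main_lt hH hH1 ha h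
    · rw [min_eq_right h.le, abs_of_pos (by linarith : (0:ℝ) < a - b)]
      rw [← main_lt hH hH1 hb h]
      exact intervalIntegral.integral_congr fun u hu => mul_comm _ _
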